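/- The list vertex arboricity of every strictly m-degenerate finite simple graph is at most ⌈m/2⌉; that is, if G is strictly m-degenerate and L is a list assignment with |L(v)| ≥ ⌈m/2⌉ for every v ∈ V(G), then there is a coloring φ with φ(v) ∈ L(v) for every v ∈ V(G) such that every color class induces a forest in G. -/

import Mathlib

open SimpleGraph

universe u

/-- `H` is a cover of `G` with `κ` parts: every edge of `H` joins distinct fibres
`X_u`, `X_v` with `uv ∈ E(G)` (in particular each fibre is independent), and the
edges between two fibres form a (possibly empty) matching. -/
def IsCover {V : Type u} (κ : ℕ) (G : SimpleGraph V) (H : SimpleGraph (V × Fin κ)) : Prop :=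
  (∀ (u v : V) (p q : Fin κ), H.Adj (u, p) (v, q) → G.Adj u v) ∧
  (∀ (u v : V) (p q q' : Fin κ), H.Adj (u, p) (v, q) → H.Adj (u, p) (v, q') → q = q')

/-- The subgraph of `Γ` induced on `R` is strictly `f`-degenerate: every nonempty
subgraph with vertices inside `R` has a vertex whose degree there is `< f`. -/
def StrictlyFDegenerateOn {α : Type u} (Γ : SimpleGraph α) (f : α → ℕ) (R : Set α) : Prop :=
  ∀ S : Set α, S ⊆ R → S.Nonempty → ∃ x ∈ S, (S ∩ {y | Γ.Adj x y}).ncard < f x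

/-- `R` is a transversal of a cover with fibres `X_v = {v} × Fin κ`. -/
def IsTransversal {V : Type u} {κ : ℕ} (R : Set (V × Fin κ)) : Prop :=
  ∀ v : V, ∃! p : Fin κ, (v, p) ∈ R

/-- `H` has a strictly `f`-degenerate transversal. -/
def HasSFDTransversal {V : Type u} {κ : ℕ} (H : SimpleGraph (V × Fin κ))
    (f : V × Fin κ → ℕ) : Prop :=
  ∃ R : Set (V × Fin κ), IsTransversal R ∧ StrictlyFDegenerateOn H f R


variable {V : Type*} {G : SimpleGraph V}

lemma getVert_mem_support' {u v : V} (p : G.Walk u v) (i : ℕ) :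
    p.getVert i ∈ p.support := by
  induction p generalizing i with
  | nil => cases i <;> simp [Walk.getVert]
  | cons h q ih =>
    cases i with
    | zero => simp [Walk.getVert]
    | succ n => simp only [Walk.getVert, Walk.support_cons, List.mem_cons]; exact Or.inr (ih n)

lemma support_getElem? {u v : V} (p : G.Walk u v) {i : ℕ} (hi : i ≤ p.length) :
    p.support[i]? = some (p.getVert i) := by
  induction p generalizing i with
  | nil =>
    simp only [Walk.length_nil, Nat.le_zero] at hi
    subst hi; simp [Walk.getVert]
  | cons h q ih =>
    cases i with
    | zero => simp [Walk.getVert]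
    | succ n =>
      simp only [Walk.support_cons, List.getElem?_cons_succ, Walk.getVert]
      exact ih (by simpa using hi)

lemma cycle_two_neighbors {x : V} (q : G.Walk x x) (hq : q.IsCycle) :
    ∃ y z : V, y ≠ z ∧ y ∈ q.support ∧ z ∈ q.support ∧ G.Adj x y ∧ G.Adj x z := by
  have h3 := hq.three_le_length
  refine ⟨q.getVert 1, q.getVert (q.length - 1), ?_, getVert_mem_support' q 1,
    getVert_mem_support' q (q.length - 1), ?_, ?_⟩
  · intro he
    have hnodup := hq.support_nodup
    have h1 : q.support.tail[0]? = some (q.getVert 1) := by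
      have := support_getElem? q (i := 1) (by omega)
      rwa [← List.getElem?_tail] at this
    have h2 : q.support.tail[q.length - 2]? = some (q.getVert (q.length - 1)) := by
      have h := support_getElem? q (i := q.length - 1) (by omega)
      have h' : q.length - 1 = (q.length - 2) + 1 := by omega
      rw [h', ← List.getElem?_tail] at h
      rw [← h'] at h
      exact h
    rw [← he] at h2
    have hlen : q.support.tail.length = q.length := by
      have := q.length_support
      simp [this]
    have := (List.getElem?_inj (by omega : 0 < q.support.tail.length) hnodup).1 (h1.trans h2.symm)
    omega
  · simpa using q.adj_getVert_succ (by omega : 0 < q.length)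
  · have := q.adj_getVert_succ (by omega : q.length - 1 < q.length)
    have h' : q.length - 1 + 1 = q.length := by omega
    rw [h', q.getVert_length] at this
    exact this.symm

lemma forest_of_two_degen {V : Type} [Fintype V] (G : SimpleGraph V) (R : Set V)
    (h : ∀ S : Set V, S ⊆ R → S.Nonempty → ∃ x ∈ S, (S ∩ {y | G.Adj x y}).ncard < 2) :
    (G.induce R).IsAcyclic := by
  intro a c hc
  classical
  set S : Set V := {v : V | ∃ hv : v ∈ R, (⟨v, hv⟩ : R) ∈ c.support} with hS
  have hSsub : S ⊆ R := fun v hv => hv.1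
  have hSne : S.Nonempty := ⟨a.1, a.2, c.start_mem_support⟩
  obtain ⟨x, hxS, hxdeg⟩ := h S hSsub hSne
  obtain ⟨hxR, hxsup⟩ := hxS
  set x' : R := ⟨x, hxR⟩
  -- rotate the cycle to start at x'
  have hq : (c.rotate x' hxsup).IsCycle := hc.rotate hxsup
  obtain ⟨y, z, hyz, hy, hz, hay, haz⟩ := cycle_two_neighbors (c.rotate x' hxsup) hq
  -- y, z are in c.support
  have hmem : ∀ w : R, w ∈ (c.rotate x' hxsup).support → w ∈ c.support := by
    intro w hw
    have hnil : ¬ c.Nil := hc.not_nil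
    rcases (Walk.mem_support_iff _).1 hw with rfl | hw'
    · exact hxsup
    · have hrot := Walk.support_rotate c x' hxsup
      have := hrot.mem_iff.1 hw'
      exact List.mem_of_mem_tail this
  have hyc : (y : V) ∈ S := ⟨y.2, by simpa using hmem y hy⟩
  have hzc : (z : V) ∈ S := ⟨z.2, by simpa using hmem z hz⟩
  have hGy : G.Adj x (y : V) := hay
  have hGz : G.Adj x (z : V) := haz
  have : 1 < (S ∩ {w | G.Adj x w}).ncard := by
    rw [Set.one_lt_ncard (Set.toFinite _)]
    exact ⟨y, ⟨hyc, hGy⟩, z, ⟨hzc, hGz⟩, fun hh => hyz (Subtype.ext hh)⟩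
  omega


lemma main_induction {V : Type} [Fintype V] (G : SimpleGraph V) (m : ℕ)
    (hG : ∀ S : Set V, S ⊆ Set.univ → S.Nonempty → ∃ x ∈ S, (S ∩ {y | G.Adj x y}).ncard < m)
    (L : V → Finset ℕ) (hL : ∀ v : V, (m + 1) / 2 ≤ (L v).card) :
    ∀ (n : ℕ) (S : Set V), S.ncard ≤ n →
      ∃ φ : V → ℕ, (∀ v ∈ S, φ v ∈ L v) ∧
        ∀ c : ℕ, ∀ T : Set V, T ⊆ {v | v ∈ S ∧ φ v = c} → T.Nonempty →
          ∃ x ∈ T, (T ∩ {y | G.Adj x y}).ncard < 2 := by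
  classical
  intro n
  induction n with
  | zero =>
    intro S hS
    have hSe : S = ∅ := by
      rw [← Set.ncard_eq_zero (Set.toFinite S)]; omega
    subst hSe
    refine ⟨fun _ => 0, by simp, ?_⟩
    intro c T hT hTne
    obtain ⟨v, hv⟩ := hTne
    exact absurd ((hT hv).1) (by simp)
  | succ n ih =>
    intro S hS
    rcases Set.eq_empty_or_nonempty S with rfl | hSne
    · exact ih ∅ (by simp)
    obtain ⟨x, hxS, hxdeg⟩ := hG S (Set.subset_univ S) hSne
    have hS' : (S \ {x}).ncard ≤ n := by
      have := Set.ncard_diff_singleton_lt_of_mem hxS (Set.toFinite S)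
      omega
    obtain ⟨φ, hφ1, hφ2⟩ := ih (S \ {x}) hS'
    -- pigeonhole: find a color c ∈ L x used at most once among neighbors of x in S
    set T : Finset V := (Set.toFinite (S ∩ {y | G.Adj x y})).toFinset with hT
    have hTcard : T.card = (S ∩ {y | G.Adj x y}).ncard := by
      rw [hT, Set.ncard_eq_toFinset_card']
      simp [Set.Finite.toFinset]
    have hTmem : ∀ v, v ∈ T ↔ v ∈ S ∧ G.Adj x v := by
      intro v; rw [hT, Set.Finite.mem_toFinset]; simp
    have hchoice : ∃ c ∈ L x, ((T.filter (fun v => φ v = c)).card ≤ 1) := by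
      by_contra hcon
      push_neg at hcon
      have hdisj : ∀ c₁ ∈ L x, ∀ c₂ ∈ L x, c₁ ≠ c₂ →
          Disjoint (T.filter (fun v => φ v = c₁)) (T.filter (fun v => φ v = c₂)) := by
        intro c₁ _ c₂ _ hne
        rw [Finset.disjoint_left]
        intro u hu₁ hu₂
        simp only [Finset.mem_filter] at hu₁ hu₂
        exact hne (hu₁.2 ▸ hu₂.2 ▸ rfl)
      have hsum : 2 * (L x).card ≤ ((L x).biUnion (fun c => T.filter (fun v => φ v = c))).card := by
        rw [Finset.card_biUnion hdisj]
        calc 2 * (L x).card = ∑ c ∈ L x, 2 := by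
              rw [Finset.sum_const, smul_eq_mul, mul_comm]
          _ ≤ ∑ c ∈ L x, (T.filter (fun v => φ v = c)).card :=
              Finset.sum_le_sum (fun c hc => (hcon c hc))
      have hTle : ((L x).biUnion (fun c => T.filter (fun v => φ v = c))).card ≤ T.card := by
        apply Finset.card_le_card
        intro v hv
        simp only [Finset.mem_biUnion, Finset.mem_filter] at hv
        obtain ⟨c, _, hv, _⟩ := hv
        exact hv
      have h1 := hL x
      have h2 : 2 * ((m+1)/2) ≤ 2 * (L x).card := by omega
      have : m ≤ 2 * ((m+1)/2) := by omega
      omega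
    obtain ⟨c, hcL, hcount⟩ := hchoice
    refine ⟨Function.update φ x c, ?_, ?_⟩
    · intro v hv
      rcases eq_or_ne v x with rfl | hne
      · simpa using hcL
      · rw [Function.update_of_ne hne]
        exact hφ1 v ⟨hv, hne⟩
    · intro d W hW hWne
      by_cases hxW : x ∈ W
      · -- x works: it has at most one neighbor in W
        refine ⟨x, hxW, ?_⟩
        have hdc : Function.update φ x c x = d := (hW hxW).2
        rw [Function.update_self] at hdc
        subst hdc
        have hsub : W ∩ {y | G.Adj x y} ⊆ ↑(T.filter (fun v => φ v = c)) := by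
          intro v ⟨hvW, hvadj⟩
          have hvne : v ≠ x := fun h => by
            subst h; exact G.irrefl hvadj
          have hv1 := hW hvW
          simp only [Set.mem_setOf_eq] at hv1
          rw [Function.update_of_ne hvne] at hv1
          simp only [Finset.coe_filter, Set.mem_setOf_eq, hTmem]
          exact ⟨⟨hv1.1, hvadj⟩, hv1.2⟩
        calc (W ∩ {y | G.Adj x y}).ncard ≤ (↑(T.filter (fun v => φ v = c)) : Set V).ncard :=
              Set.ncard_le_ncard hsub (Set.toFinite _)
          _ = (T.filter (fun v => φ v = c)).card := Set.ncard_coe_finset _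
          _ ≤ 1 := hcount
          _ < 2 := by omega
      · -- W avoids x; use the inductive property
        apply hφ2 d W ?_ hWne
        intro v hvW
        have hvne : v ≠ x := fun h => hxW (h ▸ hvW)
        have hv1 := hW hvW
        simp only [Set.mem_setOf_eq] at hv1 ⊢
        rw [Function.update_of_ne hvne] at hv1
        exact ⟨⟨hv1.1, hvne⟩, hv1.2⟩

/-- The list vertex arboricity of a strictly `m`-degenerate graph
is at most `⌈m/2⌉`: for every list assignment `L` with `|L v| ≥ ⌈m/2⌉`, there is a
coloring `φ` with `φ v ∈ L v` whose every color class induces a forest. -/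
theorem listVertexArboricity_of_strictlyDegenerate
    {V : Type} [Fintype V] (G : SimpleGraph V) (m : ℕ)
    (hG : StrictlyFDegenerateOn G (fun _ => m) Set.univ)
    (L : V → Finset ℕ) (hL : ∀ v : V, (m + 1) / 2 ≤ (L v).card) :
    ∃ φ : V → ℕ, (∀ v : V, φ v ∈ L v) ∧
      ∀ c : ℕ, (G.induce {v : V | φ v = c}).IsAcyclic := by
  classical
  obtain ⟨φ, hφ1, hφ2⟩ := main_induction G m hG L hL (Set.univ.ncard) Set.univ le_rfl
  refine ⟨φ, fun v => hφ1 v (Set.mem_univ v), fun c => ?_⟩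
  apply forest_of_two_degen
  intro S hS hSne
  exact hφ2 c S (fun v hv => ⟨Set.mem_univ v, hS hv⟩) hSne
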